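/- For positive definite matrices A1, A2 and positive semidefinite matrix B of the same size, if A1 ⪯ A2 then det(A1 + B)/det(A1) ≥ det(A2 + B)/det(A2). -/

import Mathlib

open Matrix
open scoped MatrixOrder

section Aux

variable {n : ℕ}

private lemma aux_eig_ge_one {C : Matrix (Fin n) (Fin n) ℝ} (hH : C.IsHermitian)
    (h : (C - 1).PosSemidef) (i : Fin n) : 1 ≤ hH.eigenvalues i := by
  set v : EuclideanSpace ℝ (Fin n) := hH.eigenvectorBasis i with hv
  have hvv : star (v : Fin n → ℝ) ⬝ᵥ (v : Fin n → ℝ) = 1 := by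
    have h1 : ‖v‖ = 1 := hH.eigenvectorBasis.orthonormal.1 i
    have h2 : (inner ℝ v v : ℝ) = 1 := by
      rw [real_inner_self_eq_norm_sq, h1]; norm_num
    rw [EuclideanSpace.inner_eq_star_dotProduct] at h2
    exact h2
  have heig : hH.eigenvalues i = star (v : Fin n → ℝ) ⬝ᵥ (C *ᵥ (v : Fin n → ℝ)) := by
    simpa using hH.eigenvalues_eq i
  have := h.dotProduct_mulVec_nonneg (v : Fin n → ℝ)
  rw [sub_mulVec, dotProduct_sub, one_mulVec, hvv, ← heig] at this
  linarith

private lemma aux_one_sub_inv {C : Matrix (Fin n) (Fin n) ℝ}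
    (hH : C.IsHermitian) (h : (C - 1).PosSemidef) : (1 - C⁻¹).PosSemidef := by
  set U : Matrix (Fin n) (Fin n) ℝ := (hH.eigenvectorUnitary : Matrix (Fin n) (Fin n) ℝ)
  have hU1 : U * star U = 1 := mem_unitaryGroup_iff.mp hH.eigenvectorUnitary.2
  have hU2 : star U * U = 1 := mem_unitaryGroup_iff'.mp hH.eigenvectorUnitary.2
  have hUinv : U⁻¹ = star U := inv_eq_right_inv hU1
  have hUsinv : (star U)⁻¹ = U := inv_eq_right_inv hU2
  set d : Fin n → ℝ := hH.eigenvalues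
  have hspec : C = U * Matrix.diagonal d * star U := by
    have := hH.spectral_theorem
    simpa [Function.comp] using this
  have hd1 : ∀ i, 1 ≤ d i := aux_eig_ge_one hH h
  have hd0 : ∀ i, d i ≠ 0 := fun i => by have := hd1 i; linarith
  have hinv : C⁻¹ = U * Matrix.diagonal (fun i => (d i)⁻¹) * star U := by
    refine inv_eq_right_inv ?_
    rw [hspec]
    have : star U * (U * Matrix.diagonal (fun i => (d i)⁻¹) * star U)
        = Matrix.diagonal (fun i => (d i)⁻¹) * star U := by
      rw [← mul_assoc, ← mul_assoc, hU2, one_mul]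
    calc U * Matrix.diagonal d * star U * (U * Matrix.diagonal (fun i => (d i)⁻¹) * star U)
        = U * Matrix.diagonal d * (star U * (U * Matrix.diagonal (fun i => (d i)⁻¹) * star U)) := by
          rw [mul_assoc]
      _ = U * (Matrix.diagonal d * Matrix.diagonal (fun i => (d i)⁻¹)) * star U := by
          rw [this, ← mul_assoc, mul_assoc U]
      _ = 1 := by
          rw [diagonal_mul_diagonal]
          have : (fun i => d i * (d i)⁻¹) = fun _ => (1:ℝ) := by
            funext i; exact mul_inv_cancel₀ (hd0 i)
          rw [this, diagonal_one, mul_one, hU1]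
  have hone : (1 : Matrix (Fin n) (Fin n) ℝ) = U * 1 * star U := by
    rw [mul_one, hU1]
  have hdiag : (1 : Matrix (Fin n) (Fin n) ℝ) - C⁻¹
      = U * Matrix.diagonal (fun i => 1 - (d i)⁻¹) * star U := by
    rw [hinv]
    conv_lhs => rw [hone]
    have : Matrix.diagonal (fun i => 1 - (d i)⁻¹)
        = 1 - Matrix.diagonal (fun i => (d i)⁻¹) := by
      rw [← diagonal_one, diagonal_sub]
    rw [this, Matrix.mul_sub, Matrix.sub_mul]
  rw [hdiag]
  have hpsd : (Matrix.diagonal (fun i => 1 - (d i)⁻¹)).PosSemidef := by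
    refine posSemidef_diagonal_iff.mpr fun i => ?_
    have h1 := hd1 i
    have : (d i)⁻¹ ≤ 1 := inv_le_one_of_one_le₀ h1
    linarith
  have := hpsd.mul_mul_conjTranspose_same U
  exact this

private lemma aux_one_le_det {C : Matrix (Fin n) (Fin n) ℝ}
    (hC : C.PosSemidef) : 1 ≤ (1 + C).det := by
  have hH : C.IsHermitian := hC.1
  set U : Matrix (Fin n) (Fin n) ℝ := (hH.eigenvectorUnitary : Matrix (Fin n) (Fin n) ℝ)
  have hU1 : U * star U = 1 := mem_unitaryGroup_iff.mp hH.eigenvectorUnitary.2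
  have hU2 : star U * U = 1 := mem_unitaryGroup_iff'.mp hH.eigenvectorUnitary.2
  set d : Fin n → ℝ := hH.eigenvalues
  have hspec : C = U * Matrix.diagonal d * star U := by
    have := hH.spectral_theorem
    simpa [Function.comp] using this
  have hone : (1 : Matrix (Fin n) (Fin n) ℝ) = U * 1 * star U := by
    rw [mul_one, hU1]
  have h1 : 1 + C = U * Matrix.diagonal (fun i => 1 + d i) * star U := by
    conv_lhs => rw [hone, hspec]
    have : Matrix.diagonal (fun i => 1 + d i)
        = 1 + Matrix.diagonal d := by rw [← diagonal_one, diagonal_add]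
    rw [this, Matrix.mul_add, Matrix.add_mul]
  rw [h1]
  rw [det_mul, det_mul, mul_comm, ← mul_assoc, ← det_mul, hU2, det_one, one_mul, det_diagonal]
  calc (1:ℝ) = ∏ _i : Fin n, (1:ℝ) := by simp
    _ ≤ ∏ i, (1 + d i) := by
        refine Finset.prod_le_prod (fun i _ => by norm_num) fun i _ => ?_
        have := hC.eigenvalues_nonneg i
        linarith

private lemma aux_inv_antitone {A1 A2 : Matrix (Fin n) (Fin n) ℝ}
    (hA1 : A1.PosDef) (hA2 : A2.PosDef) (hle : (A2 - A1).PosSemidef) :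
    (A1⁻¹ - A2⁻¹).PosSemidef := by
  set S : Matrix (Fin n) (Fin n) ℝ := CFC.sqrt A1 with hSdef
  have hSS : S * S = A1 := CFC.sqrt_mul_sqrt_self A1 hA1.posSemidef.nonneg
  have hSH : S.IsHermitian := (CFC.sqrt_nonneg A1).posSemidef.1
  have hSdet : IsUnit S.det := by
    have hm : S.det * S.det = A1.det := by rw [← det_mul, hSS]
    have hpos : (0:ℝ) < A1.det := hA1.det_pos
    refine isUnit_iff_ne_zero.mpr fun h0 => ?_
    rw [h0, mul_zero] at hm
    linarith [hm ▸ hpos]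
  have hSiH : (S⁻¹).IsHermitian := by
    rw [Matrix.IsHermitian, conjTranspose_nonsing_inv, hSH.eq]
  have hSsi : S * S⁻¹ = 1 := mul_nonsing_inv S hSdet
  have hSis : S⁻¹ * S = 1 := nonsing_inv_mul S hSdet
  set C : Matrix (Fin n) (Fin n) ℝ := S⁻¹ * A2 * S⁻¹ with hCdef
  have hCH : C.IsHermitian := by
    rw [Matrix.IsHermitian, hCdef, conjTranspose_mul, conjTranspose_mul, hSiH.eq, hA2.1.eq,
      mul_assoc]
  have hCsub : C - 1 = S⁻¹ᴴ * (A2 - A1) * S⁻¹ := by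
    rw [hSiH.eq, Matrix.mul_sub, Matrix.sub_mul, hCdef]
    congr 1
    rw [← hSS]
    refine Eq.symm ?_
    calc S⁻¹ * (S * S) * S⁻¹ = (S⁻¹ * S) * (S * S⁻¹) := by
          simp only [Matrix.mul_assoc]
      _ = 1 := by rw [hSis, hSsi, one_mul]
  have hC1 : (C - 1).PosSemidef := hCsub ▸ hle.conjTranspose_mul_mul_same S⁻¹
  have hkey : (1 - C⁻¹).PosSemidef := aux_one_sub_inv hCH hC1
  have hCinv : C⁻¹ = S * A2⁻¹ * S := by
    refine inv_eq_right_inv ?_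
    rw [hCdef]
    calc S⁻¹ * A2 * S⁻¹ * (S * A2⁻¹ * S)
        = S⁻¹ * (A2 * ((S⁻¹ * S) * (A2⁻¹ * S))) := by
          simp only [Matrix.mul_assoc]
      _ = S⁻¹ * ((A2 * A2⁻¹) * S) := by
          rw [hSis, one_mul, ← Matrix.mul_assoc A2 A2⁻¹ S]
      _ = 1 := by rw [mul_nonsing_inv _ hA2.det_pos.ne'.isUnit, one_mul, hSis]
  have hmain : A1⁻¹ - A2⁻¹ = S⁻¹ᴴ * (1 - C⁻¹) * S⁻¹ := by
    rw [hSiH.eq, Matrix.mul_sub, Matrix.sub_mul, hCinv]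
    congr 1
    · rw [mul_one, ← Matrix.mul_inv_rev, hSS]
    · refine Eq.symm ?_
      calc S⁻¹ * (S * A2⁻¹ * S) * S⁻¹
          = (S⁻¹ * S) * (A2⁻¹ * (S * S⁻¹)) := by simp only [Matrix.mul_assoc]
        _ = A2⁻¹ := by rw [hSis, hSsi, one_mul, mul_one]
  exact hmain ▸ hkey.conjTranspose_mul_mul_same S⁻¹

private lemma aux_det_le {M D : Matrix (Fin n) (Fin n) ℝ}
    (hM : M.PosDef) (hD : D.PosSemidef) : M.det ≤ (M + D).det := by
  set R : Matrix (Fin n) (Fin n) ℝ := CFC.sqrt D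
  have hRR : R * R = D := CFC.sqrt_mul_sqrt_self D hD.nonneg
  have hRH : R.IsHermitian := (CFC.sqrt_nonneg D).posSemidef.1
  have hMD : M + D = M * (1 + M⁻¹ * D) := by
    rw [Matrix.mul_add, mul_one, ← mul_assoc, mul_nonsing_inv _ hM.det_pos.ne'.isUnit, one_mul]
  have hdet : (M + D).det = M.det * (1 + R * M⁻¹ * R).det := by
    rw [hMD, det_mul]
    congr 1
    rw [← hRR, ← mul_assoc, ← det_one_add_mul_comm, mul_assoc]
  rw [hdet]
  have hpsd : (R * M⁻¹ * R).PosSemidef := by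
    have := (hM.inv.posSemidef).conjTranspose_mul_mul_same R
    rwa [hRH.eq] at this
  nlinarith [aux_one_le_det hpsd, hM.det_pos]

end Aux

theorem stmt_0 {n : ℕ} (A1 A2 B : Matrix (Fin n) (Fin n) ℝ)
    (hA1 : A1.PosDef) (hA2 : A2.PosDef) (hB : B.PosSemidef)
    (hle : (A2 - A1).PosSemidef) :
    (A1 + B).det / A1.det ≥ (A2 + B).det / A2.det := by
  set R : Matrix (Fin n) (Fin n) ℝ := CFC.sqrt B with hRdef
  have hRR : R * R = B := CFC.sqrt_mul_sqrt_self B hB.nonneg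
  have hRH : R.IsHermitian := (CFC.sqrt_nonneg B).posSemidef.1
  have key : ∀ (A : Matrix (Fin n) (Fin n) ℝ), A.PosDef →
      (A + B).det = A.det * (1 + R * A⁻¹ * R).det := by
    intro A hA
    have hAB : A + B = A * (1 + A⁻¹ * B) := by
      rw [Matrix.mul_add, mul_one, ← Matrix.mul_assoc,
        mul_nonsing_inv _ hA.det_pos.ne'.isUnit, one_mul]
    rw [hAB, det_mul]
    congr 1
    rw [← hRR, ← Matrix.mul_assoc, ← det_one_add_mul_comm, Matrix.mul_assoc]
  have h1 := key A1 hA1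
  have h2 := key A2 hA2
  have hd1 : (0:ℝ) < A1.det := hA1.det_pos
  have hd2 : (0:ℝ) < A2.det := hA2.det_pos
  rw [ge_iff_le, h1, h2, mul_comm, mul_comm A1.det, mul_div_assoc, mul_div_assoc,
    div_self hd2.ne', div_self hd1.ne', mul_one, mul_one]
  have hinv := aux_inv_antitone hA1 hA2 hle
  have hD : (R * (A1⁻¹ - A2⁻¹) * R).PosSemidef := by
    have := hinv.conjTranspose_mul_mul_same R
    rwa [hRH.eq] at this
  have hM : (1 + R * A2⁻¹ * R).PosDef := by
    have hpsd : (R * A2⁻¹ * R).PosSemidef := by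
      have := hA2.inv.posSemidef.conjTranspose_mul_mul_same R
      rwa [hRH.eq] at this
    exact Matrix.PosDef.one.add_posSemidef hpsd
  have hsum : 1 + R * A1⁻¹ * R = (1 + R * A2⁻¹ * R) + R * (A1⁻¹ - A2⁻¹) * R := by
    rw [Matrix.mul_sub, Matrix.sub_mul]
    abel
  rw [hsum]
  exact aux_det_le hM hD
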